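/- Assume the linear span of {Δ(a)·(b ⊗ 1) : a, b ∈ A} equals A ⊗ A, and assume there exists a nonzero element h ∈ A with Δ(a)·(1 ⊗ h) = a ⊗ h for all a ∈ A. Then there exists a k-algebra homomorphism ε : A → k (in particular ε is nonzero, ε(1) = 1) such that a·h = ε(a)·h for all a ∈ A. -/

import Mathlib

open scoped TensorProduct

/-- Algebraic analogue of the paper's Lemma 3.2: if `Δ(A)(A ⊗ 1)` spans `A ⊗ A` and there is a
nonzero `h` with `Δ(a)(1 ⊗ h) = a ⊗ h`, then there is an algebra homomorphism `ε : A → k`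
with `a·h = ε(a)·h`. -/
theorem stmt6 {k A : Type*} [Field k] [Ring A] [Algebra k A]
    (Δ : A →ₐ[k] A ⊗[k] A)
    (hspan : Submodule.span k {x : A ⊗[k] A | ∃ a b : A, x = Δ a * (b ⊗ₜ[k] (1 : A))} = ⊤)
    (h : A) (hne : h ≠ 0)
    (hh : ∀ a : A, Δ a * ((1 : A) ⊗ₜ[k] h) = a ⊗ₜ[k] h) :
    ∃ ε : A →ₐ[k] k, ∀ a : A, a * h = ε a • h := by
  haveI : Nontrivial A := nontrivial_of_ne h 0 hne
  -- Step 1: every `x` satisfies `x * (1 ⊗ h) = c ⊗ h` for some `c`.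
  have key : ∀ x : A ⊗[k] A, ∃ c : A, x * ((1 : A) ⊗ₜ[k] h) = c ⊗ₜ[k] h := by
    intro x
    have hx : x ∈ Submodule.span k
        {x : A ⊗[k] A | ∃ a b : A, x = Δ a * (b ⊗ₜ[k] (1 : A))} := by
      rw [hspan]; trivial
    induction hx using Submodule.span_induction with
    | mem x hx =>
        obtain ⟨a, b, rfl⟩ := hx
        refine ⟨a * b, ?_⟩
        have h1 : (b ⊗ₜ[k] (1 : A)) * ((1 : A) ⊗ₜ[k] h)
            = ((1 : A) ⊗ₜ[k] h) * (b ⊗ₜ[k] (1 : A)) := by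
          simp [Algebra.TensorProduct.tmul_mul_tmul]
        rw [mul_assoc, h1, ← mul_assoc, hh a, Algebra.TensorProduct.tmul_mul_tmul,
          mul_one]
    | zero => exact ⟨0, by simp⟩
    | add x y _ _ hx hy =>
        obtain ⟨c, hc⟩ := hx; obtain ⟨d, hd⟩ := hy
        exact ⟨c + d, by rw [add_mul, hc, hd, TensorProduct.add_tmul]⟩
    | smul t x _ hx =>
        obtain ⟨c, hc⟩ := hx
        exact ⟨t • c, by rw [smul_mul_assoc, hc, TensorProduct.smul_tmul']⟩
  -- Step 2: a functional `f` with `f h = 1`.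
  obtain ⟨f, hf⟩ := (LinearMap.toSpanSingleton k A h).exists_leftInverse_of_injective
    (LinearMap.ker_toSpanSingleton k hne)
  have hfh : f h = 1 := by
    have := LinearMap.congr_fun hf 1
    simpa using this
  -- a functional `g` with `g 1 = 1`.
  obtain ⟨g, hg⟩ := (LinearMap.toSpanSingleton k A (1 : A)).exists_leftInverse_of_injective
    (LinearMap.ker_toSpanSingleton k one_ne_zero)
  have hg1 : g (1 : A) = 1 := by
    have := LinearMap.congr_fun hg 1
    simpa using this
  -- Contraction maps.
  let F : A ⊗[k] A →ₗ[k] A := TensorProduct.lift (((LinearMap.lsmul k A).comp f).flip)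
  have hF : ∀ x y : A, F (x ⊗ₜ[k] y) = f y • x := fun x y => rfl
  let G : A ⊗[k] A →ₗ[k] A := TensorProduct.lift ((LinearMap.lsmul k A).comp g)
  have hG : ∀ x y : A, G (x ⊗ₜ[k] y) = g x • y := fun x y => rfl
  -- Step 3: `a * h = f (a * h) • h` for all `a`.
  have key2 : ∀ a : A, a * h = f (a * h) • h := by
    intro a
    obtain ⟨c, hc⟩ := key ((1 : A) ⊗ₜ[k] a)
    have hc' : (1 : A) ⊗ₜ[k] (a * h) = c ⊗ₜ[k] h := by
      rw [← hc, Algebra.TensorProduct.tmul_mul_tmul, one_mul]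
    have hcF : c = f (a * h) • (1 : A) := by
      have := congrArg F hc'
      rw [hF, hF, hfh, one_smul] at this
      exact this.symm
    have := congrArg G hc'
    rw [hG, hG, hg1, one_smul, hcF] at this
    rw [map_smul, hg1, smul_eq_mul, mul_one] at this
    exact this
  -- smul cancellation
  have hcancel : ∀ s t : k, s • h = t • h → s = t := by
    intro s t hst
    by_contra hne'
    have : (s - t) • h = 0 := by rw [sub_smul, hst, sub_self]
    rcases smul_eq_zero.mp this with h1 | h1
    · exact hne' (sub_eq_zero.mp h1)
    · exact hne h1
  -- the counit as a linear map
  let ε₀ : A →ₗ[k] k := f.comp (LinearMap.mulRight k h)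
  have hε₀ : ∀ a : A, a * h = ε₀ a • h := fun a => key2 a
  have hone : ε₀ 1 = 1 := by
    apply hcancel
    rw [← hε₀ 1, one_mul, one_smul]
  have hmul : ∀ a b : A, ε₀ (a * b) = ε₀ a * ε₀ b := by
    intro a b
    apply hcancel
    rw [← hε₀ (a * b), mul_assoc, hε₀ b, mul_smul_comm, hε₀ a, smul_smul, mul_comm (ε₀ b)]
  exact ⟨AlgHom.ofLinearMap ε₀ hone hmul, hε₀⟩
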